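/- arXiv:2506.17340 — 3 statements merged into one kernel-verified Lean document; each statement's English description precedes it below -/
import Mathlib

section
/- Tweedie's formula: under the same setting, E[x_0 | x_t] = (1/μ_t)(x_t + σ_t² ∇ log p_t(x_t)). -/
open MeasureTheory Real

/-- Isotropic Gaussian density on `ℝ^N` with standard deviation `σ`. -/
noncomputable def gaussPdf (N : ℕ) (σ : ℝ) (z : EuclideanSpace ℝ (Fin N)) : ℝ :=
  (2 * π * σ ^ 2) ^ (-(N : ℝ) / 2) * Real.exp (-‖z‖ ^ 2 / (2 * σ ^ 2))

theorem gauss_mul_le (σ t : ℝ) (hσ : 0 < σ) :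
    Real.exp (-t ^ 2 / (2 * σ ^ 2)) * t ≤ σ := by
  have h1 : t ^ 2 / (2 * σ ^ 2) + 1 ≤ Real.exp (t ^ 2 / (2 * σ ^ 2)) := by
    have := Real.add_one_le_exp (t ^ 2 / (2 * σ ^ 2)); linarith
  have h2 : Real.exp (-t ^ 2 / (2 * σ ^ 2)) = (Real.exp (t ^ 2 / (2 * σ ^ 2)))⁻¹ := by
    rw [← Real.exp_neg]; ring_nf
  rw [h2, inv_mul_le_iff₀ (Real.exp_pos _)]
  have h3 : t ≤ σ * (t ^ 2 / (2 * σ ^ 2) + 1) := by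
    rw [mul_add, mul_one]
    have e : σ * (t ^ 2 / (2 * σ ^ 2)) = t ^ 2 / (2 * σ) := by
      field_simp
    rw [e, div_add' _ _ _ (by positivity), le_div_iff₀ (by positivity)]
    nlinarith [sq_nonneg (t - σ)]
  nlinarith [Real.exp_pos (t ^ 2 / (2 * σ ^ 2))]

theorem gauss_hasFDerivAt (N : ℕ) (σt μt : ℝ) (y x : EuclideanSpace ℝ (Fin N)) :
    HasFDerivAt (fun x' => gaussPdf N σt (x' - μt • y))
      ((gaussPdf N σt (x - μt • y) * (-(σt ^ 2)⁻¹)) • innerSL ℝ (x - μt • y)) x := by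
  set z := x - μt • y with hz
  have h0 : HasFDerivAt (fun x' : EuclideanSpace ℝ (Fin N) => x' - μt • y)
      (ContinuousLinearMap.id ℝ _) x := (hasFDerivAt_id x).sub_const _
  have h1 : HasFDerivAt (fun x' => ‖x' - μt • y‖ ^ 2) (2 • innerSL ℝ z) x := by
    simpa only [ContinuousLinearMap.comp_id] using h0.norm_sq
  have hfe : (fun x' : EuclideanSpace ℝ (Fin N) => -‖x' - μt • y‖ ^ 2 / (2 * σt ^ 2))
      = fun x' => (-(2 * σt ^ 2)⁻¹) • ‖x' - μt • y‖ ^ 2 := by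
    funext x'; simp [smul_eq_mul]; ring
  have h2 : HasFDerivAt (fun x' => -‖x' - μt • y‖ ^ 2 / (2 * σt ^ 2))
      ((-(2 * σt ^ 2)⁻¹) • (2 • innerSL ℝ z)) x := by
    rw [hfe]; exact h1.const_smul (-(2 * σt ^ 2)⁻¹)
  have h3 : HasFDerivAt (fun x' => Real.exp (-‖x' - μt • y‖ ^ 2 / (2 * σt ^ 2)))
      (Real.exp (-‖z‖ ^ 2 / (2 * σt ^ 2)) • ((-(2 * σt ^ 2)⁻¹) • (2 • innerSL ℝ z))) x :=
    (Real.hasDerivAt_exp _).comp_hasFDerivAt x h2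
  have h4 := h3.const_smul ((2 * π * σt ^ 2) ^ (-(N : ℝ) / 2))
  have hfun : (fun x' => gaussPdf N σt (x' - μt • y))
      = fun x' => ((2 * π * σt ^ 2) ^ (-(N : ℝ) / 2)) •
          Real.exp (-‖x' - μt • y‖ ^ 2 / (2 * σt ^ 2)) := by
    funext x'; simp [gaussPdf, smul_eq_mul]
  have hder : (gaussPdf N σt z * (-(σt ^ 2)⁻¹)) • innerSL ℝ z
      = ((2 * π * σt ^ 2) ^ (-(N : ℝ) / 2)) •
          (Real.exp (-‖z‖ ^ 2 / (2 * σt ^ 2)) • ((-(2 * σt ^ 2)⁻¹) • (2 • innerSL ℝ z))) := by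
    ext w
    simp only [gaussPdf, ContinuousLinearMap.smul_apply, smul_eq_mul, two_smul,
      ContinuousLinearMap.add_apply]
    ring
  rw [hfun, hder]; exact h4

theorem gauss_continuous (N : ℕ) (σt : ℝ) : Continuous (gaussPdf N σt) := by
  unfold gaussPdf; fun_prop


/-- Tweedie's formula: if `x_t = μ_t x_0 + σ_t ε` with `ε ~ N(0, I)` independent of `x_0`
(which has density `f`), `p` the marginal density of `x_t`, then
`E[x_0 | x_t = x] = (1/μ_t) (x + σ_t² ∇ log p (x))`, where
`E[x_0 | x_t = x] = (p x)⁻¹ • ∫ (f y * N(x; μ_t y, σ_t² I)) • y dy`. -/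
theorem tweedie_formula
    (N : ℕ) (μt σt : ℝ) (hμ : 0 < μt) (hσ : 0 < σt)
    (f : EuclideanSpace ℝ (Fin N) → ℝ)
    (hf_meas : Measurable f) (hf_nonneg : ∀ y, 0 ≤ f y)
    (hf_prob : ∫ y, f y = 1)
    (p : EuclideanSpace ℝ (Fin N) → ℝ)
    (hp : ∀ x, p x = ∫ y, f y * gaussPdf N σt (x - μt • y))
    (x : EuclideanSpace ℝ (Fin N))
    (hpos : 0 < p x)
    (hint1 : Integrable (fun y => f y * gaussPdf N σt (x - μt • y)))
    (hint2 : Integrable (fun y => (f y * gaussPdf N σt (x - μt • y)) • y))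
    (hdiff : DifferentiableAt ℝ p x) :
    (p x)⁻¹ • ∫ y, (f y * gaussPdf N σt (x - μt • y)) • y
      = (1 / μt) • (x + σt ^ 2 • gradient (fun z => Real.log (p z)) x) := by
  classical
  set c : ℝ := (2 * π * σt ^ 2) ^ (-(N : ℝ) / 2) with hc_def
  have hc : 0 < c := by
    apply Real.rpow_pos_of_pos; positivity
  -- f is integrable
  have hf_int : Integrable f := by
    by_contra h
    rw [integral_undef h] at hf_prob
    norm_num at hf_prob
  -- setup F and F'
  set F : EuclideanSpace ℝ (Fin N) → EuclideanSpace ℝ (Fin N) → ℝ := fun x' y => f y * gaussPdf N σt (x' - μt • y) with hF_def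
  set F' : EuclideanSpace ℝ (Fin N) → EuclideanSpace ℝ (Fin N) → (EuclideanSpace ℝ (Fin N) →L[ℝ] ℝ) := fun x' y =>
      (f y * gaussPdf N σt (x' - μt • y) * (-(σt ^ 2)⁻¹)) • innerSL ℝ (x' - μt • y) with hF'_def
  have h_diff : ∀ y x' : EuclideanSpace ℝ (Fin N), HasFDerivAt (F · y) (F' x' y) x' := by
    intro y x'
    have := (gauss_hasFDerivAt N σt μt y x').const_smul (f y)
    have heq : f y • ((gaussPdf N σt (x' - μt • y) * (-(σt ^ 2)⁻¹)) • innerSL ℝ (x' - μt • y))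
        = F' x' y := by
      rw [smul_smul, hF'_def]; ring_nf
    rw [heq] at this
    exact this
  -- bound on derivatives
  have h_bound : ∀ y x' : EuclideanSpace ℝ (Fin N), ‖F' x' y‖ ≤ f y * (c / σt) := by
    intro y x'
    set z := x' - μt • y with hz
    have hg_nonneg : 0 ≤ gaussPdf N σt z := by
      unfold gaussPdf; positivity
    have hnorm : ‖F' x' y‖ = f y * gaussPdf N σt z * (σt ^ 2)⁻¹ * ‖z‖ := by
      have hrw : F' x' y = innerSL ℝ ((f y * gaussPdf N σt z * (-(σt ^ 2)⁻¹)) • z) := by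
        rw [_root_.map_smul]
      rw [hrw, innerSL_apply_norm, norm_smul, Real.norm_eq_abs, abs_mul, abs_mul,
        abs_of_nonneg (hf_nonneg y), abs_of_nonneg hg_nonneg, abs_neg, abs_inv,
        abs_of_nonneg (by positivity : (0:ℝ) ≤ σt ^ 2)]
    rw [hnorm]
    have key : gaussPdf N σt z * ‖z‖ ≤ c * σt := by
      have h1 : gaussPdf N σt z * ‖z‖
          = c * (Real.exp (-‖z‖ ^ 2 / (2 * σt ^ 2)) * ‖z‖) := by
        rw [hc_def]; unfold gaussPdf; ring
      rw [h1]
      exact mul_le_mul_of_nonneg_left (gauss_mul_le σt ‖z‖ hσ) hc.le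
    calc f y * gaussPdf N σt z * (σt ^ 2)⁻¹ * ‖z‖
        = f y * ((σt ^ 2)⁻¹ * (gaussPdf N σt z * ‖z‖)) := by ring
      _ ≤ f y * ((σt ^ 2)⁻¹ * (c * σt)) := by
          apply mul_le_mul_of_nonneg_left _ (hf_nonneg y)
          exact mul_le_mul_of_nonneg_left key (by positivity)
      _ = f y * (c / σt) := by field_simp
  -- measurability
  have hg_cont := gauss_continuous N σt
  have hF_meas : ∀ x' : EuclideanSpace ℝ (Fin N), AEStronglyMeasurable (F x') volume := by
    intro x'
    exact (hf_meas.mul ((hg_cont.comp (by fun_prop : Continuous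
      (fun y : EuclideanSpace ℝ (Fin N) => x' - μt • y))).measurable)).aestronglyMeasurable
  have hF'_meas : AEStronglyMeasurable (F' x) volume := by
    apply AEStronglyMeasurable.smul (f := fun y => f y * gaussPdf N σt (x - μt • y) * (-(σt ^ 2)⁻¹))
      (g := fun y => innerSL ℝ (x - μt • y))
    · exact ((hf_meas.mul ((hg_cont.comp (by fun_prop : Continuous
        (fun y : EuclideanSpace ℝ (Fin N) => x - μt • y))).measurable)).mul_const _).aestronglyMeasurable
    · exact ((innerSL ℝ (E := EuclideanSpace ℝ (Fin N))).continuous.comp (by fun_prop : Continuous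
        (fun y : EuclideanSpace ℝ (Fin N) => x - μt • y))).aestronglyMeasurable
  -- differentiation under the integral sign
  have hp_deriv : HasFDerivAt (fun x' => ∫ y, F x' y) (∫ y, F' x y) x := by
    apply hasFDerivAt_integral_of_dominated_of_fderiv_le (s := Metric.ball x 1) (Metric.ball_mem_nhds x one_pos)
      (bound := fun y => f y * (c / σt))
    · exact Filter.Eventually.of_forall hF_meas
    · exact hint1
    · exact hF'_meas
    · exact Filter.Eventually.of_forall fun y => fun x' _ => h_bound y x'
    · exact hf_int.mul_const _
    · exact Filter.Eventually.of_forall fun y => fun x' _ => h_diff y x'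
  -- the vector-valued integrand
  set w : EuclideanSpace ℝ (Fin N) → EuclideanSpace ℝ (Fin N) := fun y => (f y * gaussPdf N σt (x - μt • y) * (-(σt ^ 2)⁻¹)) • (x - μt • y)
    with hw_def
  have hw_eq : w = fun y => (-(σt ^ 2)⁻¹) • ((f y * gaussPdf N σt (x - μt • y)) • x
      - μt • ((f y * gaussPdf N σt (x - μt • y)) • y)) := by
    funext y
    rw [hw_def]
    module
  have hw_int : Integrable w := by
    rw [hw_eq]
    exact Integrable.smul (-(σt ^ 2)⁻¹) ((hint1.smul_const x).sub (hint2.smul μt))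
  -- identify the Fréchet derivative as an inner product
  set v : EuclideanSpace ℝ (Fin N) := ∫ y, w y with hv_def
  have hD : (∫ y, F' x y) = innerSL ℝ v := by
    have h1 : ∀ y : EuclideanSpace ℝ (Fin N), F' x y = innerSL ℝ (w y) := by
      intro y
      rw [hF'_def, hw_def]
      exact ((innerSL ℝ).map_smul _ _).symm
    rw [hv_def]
    calc (∫ y, F' x y) = ∫ y, innerSL ℝ (w y) := by simp_rw [h1]
      _ = innerSL ℝ (∫ y, w y) := (innerSL ℝ).integral_comp_comm hw_int
  have hp_deriv2 : HasFDerivAt p (innerSL ℝ v) x := by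
    have : p = fun x' => ∫ y, F x' y := funext hp
    rw [this, ← hD]
    exact hp_deriv
  -- gradient of log p
  have hlog : HasFDerivAt (fun z => Real.log (p z)) ((p x)⁻¹ • innerSL ℝ v) x :=
    (Real.hasDerivAt_log hpos.ne').comp_hasFDerivAt x hp_deriv2
  have hgrad : gradient (fun z => Real.log (p z)) x = (p x)⁻¹ • v := by
    apply HasGradientAt.gradient
    rw [hasGradientAt_iff_hasFDerivAt]
    refine hlog.congr_fderiv ?_
    ext u
    simp [InnerProductSpace.toDual_apply_apply, real_inner_smul_left]
  rw [hgrad]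
  -- compute v
  set I : EuclideanSpace ℝ (Fin N) := ∫ y, (f y * gaussPdf N σt (x - μt • y)) • y with hI_def
  have hv : v = (-(σt ^ 2)⁻¹) • (p x • x - μt • I) := by
    have h2' : Integrable (fun y => μt • ((f y * gaussPdf N σt (x - μt • y)) • y)) :=
      hint2.smul μt
    have hsub : (∫ y, ((f y * gaussPdf N σt (x - μt • y)) • x
          - μt • ((f y * gaussPdf N σt (x - μt • y)) • y)))
        = (∫ y, (f y * gaussPdf N σt (x - μt • y)) • x)
          - ∫ y, μt • ((f y * gaussPdf N σt (x - μt • y)) • y) :=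
      integral_sub (hint1.smul_const x) h2'
    rw [hv_def, hw_eq, integral_smul]
    congr 1
    rw [hsub, integral_smul_const, integral_smul, ← hp x]
  rw [hv]
  match_scalars
  · field_simp
  · field_simp; ring
end

section
/- If the conditional law of x_{s} given (x_t, x_0) is N(μ_s x_0 + γ_t (x_t - μ_t x_0)/σ_t, λ_t² I) with γ_t² + λ_t² = σ_s², and the law of x_t given x_0 is N(μ_t x_0, σ_t² I), then the marginal law of x_s given x_0 is N(μ_s x_0, σ_s² I). -/
open MeasureTheory ProbabilityTheory Real
open scoped NNReal ENNReal

lemma measurable_gaussianReal_mean (v : ℝ≥0) :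
    Measurable (fun m : ℝ => gaussianReal m v) := by
  by_cases hv : v = 0
  · simp only [hv, gaussianReal_zero_var]
    exact Measure.measurable_dirac
  · apply Measure.measurable_of_measurable_coe
    intro s hs
    simp_rw [gaussianReal_apply _ hv s]
    have : Measurable (fun p : ℝ × ℝ => gaussianPDF p.1 v p.2) := by
      unfold gaussianPDF gaussianPDFReal
      exact ((((measurable_snd.sub measurable_fst).pow_const 2).neg.div_const
        _).exp.const_mul _).ennreal_ofReal
    exact this.lintegral_prod_right'

lemma gaussianPDFReal_le (μ : ℝ) (v : ℝ≥0) (x : ℝ) :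
    gaussianPDFReal μ v x ≤ (Real.sqrt (2 * π * v))⁻¹ := by
  unfold gaussianPDFReal
  have h1 : Real.exp (-(x - μ) ^ 2 / (2 * v)) ≤ 1 := by
    apply Real.exp_le_one_iff.mpr
    apply div_nonpos_of_nonpos_of_nonneg
    · simp [sq_nonneg]
    · positivity
  calc (Real.sqrt (2 * π * v))⁻¹ * Real.exp (-(x - μ) ^ 2 / (2 * v))
      ≤ (Real.sqrt (2 * π * v))⁻¹ * 1 := mul_le_mul_of_nonneg_left h1 (by positivity)
    _ = _ := mul_one _

lemma gaussianPDFReal_conv (m a c : ℝ) {vt v : ℝ} (hvt : 0 < vt) (hv : 0 < v) (x : ℝ) :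
    ∫ xt, gaussianPDFReal m vt.toNNReal xt * gaussianPDFReal (a + c * xt) v.toNNReal x
      = gaussianPDFReal (a + c * m) (v + c ^ 2 * vt).toNNReal x := by
  have hvs : 0 < v + c ^ 2 * vt := by positivity
  set vs : ℝ := v + c ^ 2 * vt with hvs_def
  set d : ℝ := x - a - c * m with hd
  set A : ℝ := vs / (2 * vt * v) with hA
  have hApos : 0 < A := by positivity
  set h : ℝ := m + c * d * vt / vs with hh
  have hπ : (0:ℝ) < π := Real.pi_pos
  have hct : ((vt.toNNReal : ℝ≥0) : ℝ) = vt := Real.coe_toNNReal _ hvt.le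
  have hcv : ((v.toNNReal : ℝ≥0) : ℝ) = v := Real.coe_toNNReal _ hv.le
  have hcs : (((vs).toNNReal : ℝ≥0) : ℝ) = vs := Real.coe_toNNReal _ hvs.le
  set C : ℝ := (Real.sqrt (2 * π * vt))⁻¹ * (Real.sqrt (2 * π * v))⁻¹
      * Real.exp (-d ^ 2 / (2 * vs)) with hC
  have key : ∀ xt, gaussianPDFReal m vt.toNNReal xt * gaussianPDFReal (a + c * xt) v.toNNReal x
      = C * Real.exp (-A * (xt - h) ^ 2) := by
    intro xt
    unfold gaussianPDFReal
    rw [hct, hcv]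
    rw [hC, mul_assoc ((Real.sqrt (2 * π * vt))⁻¹ * (Real.sqrt (2 * π * v))⁻¹),
      ← Real.exp_add, mul_mul_mul_comm, ← Real.exp_add]
    congr 2
    rw [hA, hh, hd, hvs_def]
    have hvs2 : v + c ^ 2 * vt ≠ 0 := by positivity
    field_simp
    ring
  simp_rw [key]
  rw [integral_const_mul C _]
  have hsub : ∫ xt : ℝ, Real.exp (-A * (xt - h) ^ 2)
      = ∫ u : ℝ, Real.exp (-A * u ^ 2) :=
    integral_sub_right_eq_self (fun u : ℝ => Real.exp (-A * u ^ 2)) h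
  rw [hsub, integral_gaussian]
  have hK : (Real.sqrt (2 * π * vt))⁻¹ * (Real.sqrt (2 * π * v))⁻¹ * Real.sqrt (π / A)
      = (Real.sqrt (2 * π * vs))⁻¹ := by
    rw [← Real.sqrt_inv, ← Real.sqrt_inv, ← Real.sqrt_mul (by positivity),
      ← Real.sqrt_mul (by positivity), ← Real.sqrt_inv (2 * π * vs)]
    congr 1
    rw [hA]
    field_simp
  unfold gaussianPDFReal
  rw [hcs]
  have hexp : (-(x - (a + c * m)) ^ 2 / (2 * vs)) = -d ^ 2 / (2 * vs) := by
    rw [hd]; ring_nf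
  rw [hexp, hC, ← hK]
  ring

lemma gaussianReal_bind (m a c : ℝ) {vt v : ℝ} (hvt : 0 < vt) (hv : 0 < v) :
    Measure.bind (gaussianReal m vt.toNNReal)
        (fun xt => gaussianReal (a + c * xt) v.toNNReal)
      = gaussianReal (a + c * m) (v + c ^ 2 * vt).toNNReal := by
  have hvt' : vt.toNNReal ≠ 0 := (Real.toNNReal_pos.mpr hvt).ne'
  have hv' : v.toNNReal ≠ 0 := (Real.toNNReal_pos.mpr hv).ne'
  have hvs : (0:ℝ) < v + c ^ 2 * vt := by positivity
  have hvs' : (v + c ^ 2 * vt).toNNReal ≠ 0 := (Real.toNNReal_pos.mpr hvs).ne'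
  have hmeanmeas : Measurable (fun xt : ℝ => a + c * xt) :=
    (measurable_id.const_mul c).const_add a
  have hkmeas : Measurable (fun xt : ℝ => gaussianReal (a + c * xt) v.toNNReal) :=
    (measurable_gaussianReal_mean _).comp hmeanmeas
  have hjoint : Measurable (fun p : ℝ × ℝ => gaussianPDF p.1 v.toNNReal p.2) := by
    unfold gaussianPDF gaussianPDFReal
    exact ((((measurable_snd.sub measurable_fst).pow_const 2).neg.div_const
      _).exp.const_mul _).ennreal_ofReal
  ext s hs
  have hg : Measurable (fun xt : ℝ => ∫⁻ x in s, gaussianPDF (a + c * xt) v.toNNReal x) :=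
    hjoint.lintegral_prod_right'.comp hmeanmeas
  rw [Measure.bind_apply hs hkmeas.aemeasurable]
  simp_rw [gaussianReal_apply _ hv' s]
  rw [gaussianReal_of_var_ne_zero _ hvt',
    lintegral_withDensity_eq_lintegral_mul _ (measurable_gaussianPDF _ _) hg]
  simp only [Pi.mul_apply]
  simp_rw [← lintegral_const_mul _ (measurable_gaussianPDF _ _)]
  rw [lintegral_lintegral_swap]
  swap
  · exact ((measurable_gaussianPDF m _).comp measurable_fst).mul
      (hjoint.comp ((hmeanmeas.comp measurable_fst).prodMk measurable_snd)) |>.aemeasurable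
  have hinner : ∀ x, (∫⁻ xt, gaussianPDF m vt.toNNReal xt
        * gaussianPDF (a + c * xt) v.toNNReal x)
      = gaussianPDF (a + c * m) (v + c ^ 2 * vt).toNNReal x := by
    intro x
    have hp2meas : Measurable (fun xt : ℝ => gaussianPDFReal (a + c * xt) v.toNNReal x) := by
      unfold gaussianPDFReal
      exact (((((measurable_const.sub hmeanmeas)).pow_const 2).neg.div_const
        _).exp.const_mul _)
    have hInt : Integrable (fun xt : ℝ =>
        gaussianPDFReal m vt.toNNReal xt * gaussianPDFReal (a + c * xt) v.toNNReal x) := by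
      have := (integrable_gaussianPDFReal m vt.toNNReal).bdd_mul
        (hp2meas.aestronglyMeasurable)
        (c := (Real.sqrt (2 * π * v.toNNReal))⁻¹) (ae_of_all _ fun xt => by
          rw [Real.norm_of_nonneg (gaussianPDFReal_nonneg _ _ _)]
          exact gaussianPDFReal_le _ _ _)
      simpa [mul_comm] using this
    unfold gaussianPDF
    simp_rw [← ENNReal.ofReal_mul (gaussianPDFReal_nonneg m _ _)]
    rw [← ofReal_integral_eq_lintegral_ofReal hInt
      (ae_of_all _ fun xt => mul_nonneg (gaussianPDFReal_nonneg _ _ _)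
        (gaussianPDFReal_nonneg _ _ _)),
      gaussianPDFReal_conv m a c hvt hv x]
  simp_rw [hinner]
  rw [gaussianReal_apply _ hvs' s]

/-- Consistency of the DDIM family of reverse transition kernels with the forward marginals:
if `x_s | (x_t, x_0) ~ N(μ_s x_0 + γ (x_t - μ_t x_0)/σ_t, λ²)` with `γ² + λ² = σ_s²`, and
`x_t | x_0 ~ N(μ_t x_0, σ_t²)`, then the marginal of `x_s` given `x_0` is `N(μ_s x_0, σ_s²)`.
(One-dimensional statement; the `ℝ^N` case with isotropic covariance is its product.) -/
theorem ddim_kernel_marginal_consistency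
    (μs μt σs σt γ lam : ℝ)
    (hμs : 0 < μs) (hμt : 0 < μt) (hσs : 0 < σs) (hσt : 0 < σt)
    (hγ0 : 0 ≤ γ) (hγs : γ ≤ σs)
    (hlam : lam = Real.sqrt (σs ^ 2 - γ ^ 2))
    (x0 : ℝ) :
    Measure.bind (gaussianReal (μt * x0) (Real.toNNReal (σt ^ 2)))
        (fun xt => gaussianReal (μs * x0 + γ * (xt - μt * x0) / σt)
          (Real.toNNReal (lam ^ 2)))
      = gaussianReal (μs * x0) (Real.toNNReal (σs ^ 2)) := by
  have hσt0 : σt ≠ 0 := hσt.ne'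
  have hmean : ∀ xt : ℝ, μs * x0 + γ * (xt - μt * x0) / σt
      = (μs * x0 - γ / σt * (μt * x0)) + γ / σt * xt := by
    intro xt; field_simp; ring
  rcases eq_or_lt_of_le hγs with hγeq | hγlt
  · -- γ = σs, lam = 0, kernel is dirac
    have hlam0 : lam = 0 := by rw [hlam, ← hγeq]; simp
    have hfmeas : Measurable (fun xt : ℝ => μs * x0 + γ * (xt - μt * x0) / σt) := by
      simp_rw [hmean]
      exact (measurable_id.const_mul _).const_add _
    have hdirac : (fun xt : ℝ => gaussianReal (μs * x0 + γ * (xt - μt * x0) / σt)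
        (Real.toNNReal (lam ^ 2))) = fun xt => Measure.dirac (μs * x0 + γ * (xt - μt * x0) / σt) := by
      funext xt
      rw [hlam0]
      norm_num [gaussianReal_zero_var]
    rw [hdirac, Measure.bind_dirac_eq_map _ hfmeas]
    have : (fun xt : ℝ => μs * x0 + γ * (xt - μt * x0) / σt)
        = (fun y => y + (μs * x0 - γ / σt * (μt * x0))) ∘ (fun xt => γ / σt * xt) := by
      funext xt; simp [Function.comp, hmean xt]; ring
    have hgm : Measurable fun y : ℝ => y + (μs * x0 - γ / σt * (μt * x0)) :=
      measurable_add_const _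
    have hfm : Measurable fun xt : ℝ => γ / σt * xt := measurable_const_mul _
    rw [this, ← Measure.map_map hgm hfm,
      gaussianReal_map_const_mul, gaussianReal_map_add_const]
    congr 1
    · field_simp; ring
    · ext
      push_cast
      rw [Real.coe_toNNReal _ (sq_nonneg σt), Real.coe_toNNReal _ (sq_nonneg σs), ← hγeq]
      field_simp
  · -- γ < σs : positive variance case
    have hvpos : (0:ℝ) < lam ^ 2 := by
      rw [hlam, Real.sq_sqrt (by nlinarith)]
      nlinarith
    have hlamsq : lam ^ 2 = σs ^ 2 - γ ^ 2 := by
      rw [hlam, Real.sq_sqrt (by nlinarith)]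
    have hvt : (0:ℝ) < σt ^ 2 := by positivity
    have h := gaussianReal_bind (μt * x0) (μs * x0 - γ / σt * (μt * x0)) (γ / σt) hvt hvpos
    simp_rw [hmean]
    rw [h]
    congr 1
    · ring
    · congr 1
      rw [hlamsq]
      field_simp
      ring
end

section
/- Under the DDIM family of conditionals, the conditional expectation satisfies E[x_{t-Δt} | x_t] = (μ_{t-Δt}/μ_t) x_t + ((μ_{t-Δt}/μ_t) σ_t - γ_t) σ_t ∇ log p_t(x_t). -/
open MeasureTheory Real

lemma gaussPdf_nonneg (N : ℕ) (σ : ℝ) (z : EuclideanSpace ℝ (Fin N)) :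
    0 ≤ gaussPdf N σ z :=
  mul_nonneg (Real.rpow_nonneg (by positivity) _) (Real.exp_pos _).le

lemma gaussPdf_continuous (N : ℕ) (σ : ℝ) : Continuous (gaussPdf N σ) := by
  unfold gaussPdf; fun_prop

lemma gaussPdf_hasFDerivAt (N : ℕ) (σ : ℝ) (z : EuclideanSpace ℝ (Fin N)) :
    HasFDerivAt (gaussPdf N σ) ((-(σ ^ 2)⁻¹ * gaussPdf N σ z) • innerSL ℝ z) z := by
  have h1 : HasFDerivAt (fun w : EuclideanSpace ℝ (Fin N) => ‖w‖ ^ 2)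
      (2 • innerSL ℝ z) z := by
    simpa using (hasFDerivAt_id z).norm_sq
  have h2 : HasFDerivAt (fun w : EuclideanSpace ℝ (Fin N) => -‖w‖ ^ 2 / (2 * σ ^ 2))
      ((-(2 * σ ^ 2)⁻¹) • (2 • innerSL ℝ z)) z := by
    have heq : (fun w : EuclideanSpace ℝ (Fin N) => -‖w‖ ^ 2 / (2 * σ ^ 2))
        = fun w => (-(2 * σ ^ 2)⁻¹) * ‖w‖ ^ 2 := by funext w; ring
    rw [heq]
    exact h1.const_mul _
  have h3 := (Real.hasDerivAt_exp (-‖z‖ ^ 2 / (2 * σ ^ 2))).comp_hasFDerivAt z h2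
  have h4 := h3.const_mul ((2 * π * σ ^ 2) ^ (-(N : ℝ) / 2))
  refine h4.congr_fderiv ?_
  ext v
  simp [gaussPdf]
  ring

lemma mul_exp_sq_le (σ t : ℝ) (hσ : 0 < σ) :
    t * Real.exp (-t ^ 2 / (2 * σ ^ 2)) ≤ σ := by
  have hA : t ^ 2 / (2 * σ ^ 2) + 1 ≤ Real.exp (t ^ 2 / (2 * σ ^ 2)) :=
    Real.add_one_le_exp _
  have hE : Real.exp (-t ^ 2 / (2 * σ ^ 2)) = (Real.exp (t ^ 2 / (2 * σ ^ 2)))⁻¹ := by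
    rw [← Real.exp_neg]; ring_nf
  rw [hE, ← div_eq_mul_inv, div_le_iff₀ (Real.exp_pos _)]
  have h2 : σ * (t ^ 2 / (2 * σ ^ 2) + 1) ≤ σ * Real.exp (t ^ 2 / (2 * σ ^ 2)) :=
    mul_le_mul_of_nonneg_left hA hσ.le
  refine le_trans ?_ h2
  have h4 : σ * (t ^ 2 / (2 * σ ^ 2) + 1) = σ + t ^ 2 / (2 * σ) := by
    field_simp; ring
  rw [h4]
  have key : σ + t ^ 2 / (2 * σ) - t = (t - σ) ^ 2 / (2 * σ) + σ / 2 := by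
    field_simp; ring
  have h3 : 0 ≤ (t - σ) ^ 2 / (2 * σ) := div_nonneg (sq_nonneg _) (by positivity)
  linarith

set_option maxHeartbeats 1000000 in
set_option synthInstance.maxHeartbeats 400000 in
/-- Under the DDIM family of reverse conditionals
`p(x_{t-Δt} | x_t, x_0) = N(μ_{t-Δt} x_0 + γ_t (x_t - μ_t x_0)/σ_t, λ_t² I)`
with `γ_t² + λ_t² = σ_{t-Δt}²`, the conditional expectation
`E[x_{t-Δt} | x_t = x] = ∫ E[x_{t-Δt}|x_t,x_0=y] p(y|x_t=x) dy` satisfies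
`E[x_{t-Δt} | x_t = x] = (μ_{t-Δt}/μ_t) x + ((μ_{t-Δt}/μ_t) σ_t - γ_t) σ_t ∇ log p_t(x)`. -/
theorem reverse_conditional_expectation
    (N : ℕ) (μt μs σt σs γ lam : ℝ)
    (hμt : 0 < μt) (hμs : 0 < μs) (hσt : 0 < σt) (hσs : 0 < σs)
    (hglam : γ ^ 2 + lam ^ 2 = σs ^ 2)
    (f : EuclideanSpace ℝ (Fin N) → ℝ)
    (hf_meas : Measurable f) (hf_nonneg : ∀ y, 0 ≤ f y)
    (hf_prob : ∫ y, f y = 1)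
    (p : EuclideanSpace ℝ (Fin N) → ℝ)
    (hp : ∀ x, p x = ∫ y, f y * gaussPdf N σt (x - μt • y))
    (x : EuclideanSpace ℝ (Fin N))
    (hpos : 0 < p x)
    (hint1 : Integrable (fun y => f y * gaussPdf N σt (x - μt • y)))
    (hint2 : Integrable (fun y => (f y * gaussPdf N σt (x - μt • y)) • y))
    (hdiff : DifferentiableAt ℝ p x) :
    (p x)⁻¹ • ∫ y, (f y * gaussPdf N σt (x - μt • y)) •
        (μs • y + (γ / σt) • (x - μt • y))
      = (μs / μt) • x
        + ((μs / μt * σt - γ) * σt) • gradient (fun z => Real.log (p z)) x := by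
  classical
  have hσ2 : (0:ℝ) < σt ^ 2 := by positivity
  set C : ℝ := (2 * π * σt ^ 2) ^ (-(N : ℝ) / 2) with hC
  have hCpos : 0 < C := Real.rpow_pos_of_pos (by positivity) _
  -- f is integrable
  have hf_int : Integrable f := by
    by_contra h
    rw [integral_undef h] at hf_prob
    norm_num at hf_prob
  -- the weight function
  set w : EuclideanSpace ℝ (Fin N) → ℝ := fun y => f y * gaussPdf N σt (x - μt • y) with hwdef
  -- the pointwise derivative family
  set F' : EuclideanSpace ℝ (Fin N) → EuclideanSpace ℝ (Fin N) → (EuclideanSpace ℝ (Fin N) →L[ℝ] ℝ) := fun x' y =>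
    (f y * (-(σt ^ 2)⁻¹ * gaussPdf N σt (x' - μt • y))) • innerSL ℝ (x' - μt • y)
    with hF'def
  -- pointwise differentiability
  have hdiffy : ∀ y : EuclideanSpace ℝ (Fin N), ∀ x' ∈ Metric.ball x 1,
      HasFDerivAt (fun x'' => f y * gaussPdf N σt (x'' - μt • y)) (F' x' y) x' := by
    intro y x' _
    have h0 : HasFDerivAt (fun x'' : EuclideanSpace ℝ (Fin N) => x'' - μt • y)
        (ContinuousLinearMap.id ℝ _) x' := (hasFDerivAt_id x').sub_const _
    have hg := (gaussPdf_hasFDerivAt N σt (x' - μt • y)).comp x' h0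
    have h1 := hg.const_mul (f y)
    simpa [hF'def, ContinuousLinearMap.comp_id, smul_smul] using h1
  -- measurability
  have hmeasx : ∀ x' : EuclideanSpace ℝ (Fin N),
      AEStronglyMeasurable (fun y => f y * gaussPdf N σt (x' - μt • y)) volume := by
    intro x'
    exact (hf_meas.mul (((gaussPdf_continuous N σt).measurable).comp
      (measurable_const.sub (measurable_id.const_smul μt)))).aestronglyMeasurable
  have hmeas' : AEStronglyMeasurable (F' x) volume := by
    refine AEStronglyMeasurable.smul
      (f := fun y => f y * (-(σt ^ 2)⁻¹ * gaussPdf N σt (x - μt • y)))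
      (g := fun y => innerSL ℝ (x - μt • y)) ?_ ?_
    · exact (hf_meas.mul ((measurable_const.mul
        (((gaussPdf_continuous N σt).measurable).comp
          (measurable_const.sub (measurable_id.const_smul μt)))))).aestronglyMeasurable
    · exact ((innerSL ℝ (E := EuclideanSpace ℝ (Fin N))).continuous.comp
        (continuous_const.sub (continuous_id.const_smul μt))).aestronglyMeasurable
  -- bound
  have hbound : ∀ᵐ y ∂(volume : Measure (EuclideanSpace ℝ (Fin N))), ∀ x' ∈ Metric.ball x 1,
      ‖F' x' y‖ ≤ f y * ((σt ^ 2)⁻¹ * (C * σt)) := by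
    refine Filter.Eventually.of_forall (fun y x' _ => ?_)
    have hv : ‖F' x' y‖ = f y * ((σt ^ 2)⁻¹ *
        (gaussPdf N σt (x' - μt • y) * ‖x' - μt • y‖)) := by
      show ‖(f y * (-(σt ^ 2)⁻¹ * gaussPdf N σt (x' - μt • y))) • innerSL ℝ (x' - μt • y)‖
        = f y * ((σt ^ 2)⁻¹ * (gaussPdf N σt (x' - μt • y) * ‖x' - μt • y‖))
      rw [norm_smul (f y * (-(σt ^ 2)⁻¹ * gaussPdf N σt (x' - μt • y)))
        (innerSL ℝ (x' - μt • y))]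
      rw [innerSL_apply_norm, Real.norm_eq_abs, abs_mul, abs_mul, abs_neg,
        abs_of_nonneg (hf_nonneg y), abs_of_nonneg (gaussPdf_nonneg N σt _),
        abs_of_nonneg (inv_nonneg.mpr hσ2.le)]
      ring
    rw [hv]
    have hg : gaussPdf N σt (x' - μt • y) * ‖x' - μt • y‖ ≤ C * σt := by
      unfold gaussPdf
      rw [← hC]
      have := mul_exp_sq_le σt ‖x' - μt • y‖ hσt
      calc C * Real.exp (-‖x' - μt • y‖ ^ 2 / (2 * σt ^ 2)) * ‖x' - μt • y‖
          = C * (‖x' - μt • y‖ * Real.exp (-‖x' - μt • y‖ ^ 2 / (2 * σt ^ 2))) := by ring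
        _ ≤ C * σt := mul_le_mul_of_nonneg_left this hCpos.le
    have h1 : (σt ^ 2)⁻¹ * (gaussPdf N σt (x' - μt • y) * ‖x' - μt • y‖)
        ≤ (σt ^ 2)⁻¹ * (C * σt) :=
      mul_le_mul_of_nonneg_left hg (inv_nonneg.mpr hσ2.le)
    exact mul_le_mul_of_nonneg_left h1 (hf_nonneg y)
  -- differentiation under the integral sign
  have hFder : HasFDerivAt (fun x' => ∫ y, f y * gaussPdf N σt (x' - μt • y))
      (∫ y, F' x y) x :=
    hasFDerivAt_integral_of_dominated_of_fderiv_le (Metric.ball_mem_nhds x (by norm_num : (0:ℝ) < 1))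
      (Filter.Eventually.of_forall hmeasx) hint1 hmeas' hbound
      (hf_int.mul_const _) (Filter.Eventually.of_forall hdiffy)
  -- identify the derivative as an inner product
  set φ : EuclideanSpace ℝ (Fin N) → EuclideanSpace ℝ (Fin N) := fun y => (f y * (-(σt ^ 2)⁻¹ * gaussPdf N σt (x - μt • y))) •
    (x - μt • y) with hφdef
  have hφ_int : Integrable φ := by
    have h1 : Integrable (fun y => (-(σt ^ 2)⁻¹) • (w y • x)) :=
      (hint1.smul_const x).smul (-(σt ^ 2)⁻¹)
    have h2 : Integrable (fun y => ((σt ^ 2)⁻¹ * μt) • (w y • y)) :=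
      hint2.smul ((σt ^ 2)⁻¹ * μt)
    have : φ = fun y => (-(σt ^ 2)⁻¹) • (w y • x) + ((σt ^ 2)⁻¹ * μt) • (w y • y) := by
      funext y
      simp only [hφdef, hwdef, smul_sub, smul_smul]
      module
    rw [this]
    exact h1.add h2
  set J : EuclideanSpace ℝ (Fin N) →L[ℝ] (EuclideanSpace ℝ (Fin N) →L[ℝ] ℝ) := innerSL ℝ with hJ
  have hFeq : (∫ y, F' x y) = innerSL ℝ (∫ y, φ y) := by
    have h1 : ∀ y, F' x y = J (φ y) := by
      intro y
      rw [hF'def, hφdef]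
      exact (map_smul J _ _).symm
    calc (∫ y, F' x y) = ∫ y, J (φ y) := by simp_rw [h1]
      _ = J (∫ y, φ y) := J.integral_comp_comm hφ_int
      _ = innerSL ℝ (∫ y, φ y) := rfl
  set V : EuclideanSpace ℝ (Fin N) := ∫ y, φ y with hV
  have hpder : HasFDerivAt p (innerSL ℝ V) x := by
    have hpe : p = fun x' => ∫ y, f y * gaussPdf N σt (x' - μt • y) := funext hp
    rw [hpe]
    rw [← hFeq]
    exact hFder
  -- gradient of log p
  have hlog : HasGradientAt (fun z => Real.log (p z)) ((p x)⁻¹ • V) x := by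
    rw [hasGradientAt_iff_hasFDerivAt]
    have h1 := (Real.hasDerivAt_log hpos.ne').comp_hasFDerivAt x hpder
    have h2 : InnerProductSpace.toDual ℝ (EuclideanSpace ℝ (Fin N)) ((p x)⁻¹ • V) = (p x)⁻¹ • innerSL ℝ V := by
      ext u
      simp [InnerProductSpace.toDual_apply_apply, real_inner_smul_left]
    rw [h2]
    exact h1
  rw [hlog.gradient]
  -- compute V
  set m : EuclideanSpace ℝ (Fin N) := ∫ y, w y • y with hm
  have hVval : V = (-(σt ^ 2)⁻¹) • ((p x) • x) + ((σt ^ 2)⁻¹ * μt) • m := by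
    rw [hV]
    have : φ = fun y => (-(σt ^ 2)⁻¹) • (w y • x) + ((σt ^ 2)⁻¹ * μt) • (w y • y) := by
      funext y
      simp only [hφdef, hwdef, smul_sub, smul_smul]
      module
    have hpw : p x = ∫ y, w y := hp x
    rw [this]
    beta_reduce
    have h1 : Integrable (fun y => (-(σt ^ 2)⁻¹) • (w y • x)) volume :=
      (hint1.smul_const x).smul (-(σt ^ 2)⁻¹)
    have h2 : Integrable (fun y => ((σt ^ 2)⁻¹ * μt) • (w y • y)) volume :=
      hint2.smul ((σt ^ 2)⁻¹ * μt)
    rw [integral_add h1 h2,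
      integral_smul, integral_smul, integral_smul_const, ← hm, ← hpw]
  -- compute the LHS integral
  have hLHS : (∫ y, (f y * gaussPdf N σt (x - μt • y)) •
        (μs • y + (γ / σt) • (x - μt • y)))
      = (μs - γ / σt * μt) • m + (γ / σt) • ((p x) • x) := by
    have heq : (fun y => (f y * gaussPdf N σt (x - μt • y)) •
        (μs • y + (γ / σt) • (x - μt • y)))
        = fun y => (μs - γ / σt * μt) • (w y • y) + (γ / σt) • (w y • x) := by
      funext y
      simp only [hwdef, smul_add, smul_sub, smul_smul]
      module
    have hpw : p x = ∫ y, w y := hp x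
    rw [heq]
    beta_reduce
    have h1 : Integrable (fun y => (μs - γ / σt * μt) • (w y • y)) volume :=
      hint2.smul (μs - γ / σt * μt)
    have h2 : Integrable (fun y => (γ / σt) • (w y • x)) volume :=
      (hint1.smul_const x).smul (γ / σt)
    rw [integral_add h1 h2,
      integral_smul, integral_smul, integral_smul_const, ← hm, ← hpw]
  rw [hLHS, hVval]
  have hPne : p x ≠ 0 := hpos.ne'
  match_scalars
  · field_simp
  · field_simp
    ring
end
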